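/- Let G be a graph, W and Y disjoint independent sets with |W| = k and |Y| = k+1, such that W ∪ Y induces a forest T, every vertex of W has a neighbor in Y, and every vertex of W has degree at least 2 in T. Then T is a tree (i.e., W ∪ Y induces a connected forest) and every vertex of W has degree exactly 2 in T. -/

import Mathlib

open SimpleGraph

variable {V : Type*}

/-- A set of vertices is independent if its vertices are pairwise non-adjacent. -/
def IsIndepSet (G : SimpleGraph V) (s : Set V) : Prop :=
  s.Pairwise fun a b => ¬ G.Adj a b

/-- `G` contains an induced cycle on `n` vertices. -/
def HasInducedCycle (G : SimpleGraph V) (n : ℕ) : Prop :=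
  ∃ f : Fin n ↪ V, ∀ i j, G.Adj (f i) (f j) ↔ (SimpleGraph.cycleGraph n).Adj i j

/-- `G` is even-hole-free: it has no induced cycle of even length at least 4. -/
def EvenHoleFree (G : SimpleGraph V) : Prop :=
  ∀ n, 4 ≤ n → Even n → ¬ HasInducedCycle G n

/-- `G` is C4-free: no induced cycle on 4 vertices. -/
def C4Free (G : SimpleGraph V) : Prop := ¬ HasInducedCycle G 4

section AuxForest
open Finset Walk

/-- In an acyclic graph, the number of edges plus the number of "component roots"
(vertices that are the chosen representative of their connected component) equals
the number of vertices. -/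
lemma forest_card_aux [Fintype V] [DecidableEq V] (G : SimpleGraph V)
    [DecidableRel G.Adj] (hG : G.IsAcyclic) :
    G.edgeFinset.card
      + (Finset.univ.filter fun v => (G.connectedComponentMk v).out = v).card
      = Fintype.card V := by
  classical
  set root : V → V := fun v => (G.connectedComponentMk v).out with hrootdef
  have hmkroot : ∀ v, G.connectedComponentMk (root v) = G.connectedComponentMk v :=
    fun v => Quot.out_eq _
  have hreach : ∀ v, G.Reachable v (root v) :=
    fun v => (ConnectedComponent.exact (hmkroot v)).symm
  have hradj : ∀ {a b : V}, G.Adj a b → root a = root b := by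
    intro a b h
    simp only [hrootdef]
    rw [ConnectedComponent.sound h.reachable]
  have huniq : ∀ v, ∃! p : G.Walk v (root v), p.IsPath := by
    intro v
    refine ⟨((hreach v).some.toPath : G.Path v (root v)).1,
      ((hreach v).some.toPath : G.Path v (root v)).2, fun p hp => by
      have := hG.path_unique ⟨p, hp⟩ ((hreach v).some.toPath)
      exact Subtype.ext_iff.mp this⟩
  choose f hf hf' using huniq
  set R : Finset V := Finset.univ.filter fun v => root v = v with hR
  have key : G.edgeFinset.card = Rᶜ.card := by
    refine Eq.symm <| Finset.card_bij
      (fun w hw => ((f w).firstDart <| ?notNil).edge)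
      (fun a ha => ?memEdges) ?inj ?surj
    case notNil =>
      refine not_nil_of_ne fun h => ?_
      simp only [hR, Finset.mem_compl, Finset.mem_filter, Finset.mem_univ, true_and] at hw
      exact hw h.symm
    case memEdges => simp
    case inj =>
      intro a ha b hb h
      wlog h' : (f a).length ≤ (f b).length generalizing a b
      · exact Eq.symm (this _ hb _ ha h.symm (le_of_not_ge h'))
      rw [dart_edge_eq_iff] at h
      obtain (h | h) := h
      · exact (congrArg (·.fst) h)
      · have hnna : ¬(f a).Nil := by
          refine not_nil_of_ne fun hh => ?_
          simp only [hR, Finset.mem_compl, Finset.mem_filter, Finset.mem_univ, true_and] at ha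
          exact ha hh.symm
        have h1 : ((f a).firstDart hnna).snd = b := congrArg (·.snd) h
        have h1' : (f a).getVert 1 = b := by
          have := h1
          rw [firstDart_toProd] at this
          exact this
        have hadj : G.Adj a b := by
          have := ((f a).firstDart hnna).adj
          rw [firstDart_toProd] at this
          simpa [h1'] using this
        have hre : root a = root b := hradj hadj
        have h3 := congrArg Walk.length (hf' b (((f a).tail.copy h1 hre)) ?_)
        · erw [length_copy, ← add_left_inj 1, length_tail_add_one hnna] at h3
          omega
        · simp only [isPath_copy]
          exact (isPath_copy _ _ _).2 (hf a).tail
    case surj =>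
      simp only [mem_edgeFinset, Sym2.forall, SimpleGraph.mem_edgeSet]
      intro x y h
      wlog h' : (f x).length ≤ (f y).length generalizing x y
      · rw [Sym2.eq_swap]
        exact this y x h.symm (le_of_not_ge h')
      have hre : root x = root y := hradj h
      have hymem : y ∈ Rᶜ := by
        simp only [hR, Finset.mem_compl, Finset.mem_filter, Finset.mem_univ, true_and]
        intro hy'
        have hfy : (f y).length = 0 := by
          have := hf' y (Walk.nil.copy rfl hy'.symm) (by simp)
          rw [← this]; simp
        have hyx : y = root x := by rw [hre, hy']
        have hfx : (f x).length = 1 := by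
          have := hf' x ((Walk.cons h Walk.nil).copy rfl hyx) (by simp [h.ne])
          rw [← this]; simp
        omega
      refine ⟨y, hymem, ?_⟩
      have hy : y ∉ (f x).support := by
        intro hy
        have htu : (f x).takeUntil y hy = Walk.cons h Walk.nil := by
          have h1 : ((f x).takeUntil y hy).IsPath := (hf x).takeUntil hy
          have h2 : (Walk.cons h Walk.nil : G.Walk x y).IsPath := by simp [h.ne]
          have := hG.path_unique ⟨_, h1⟩ ⟨_, h2⟩
          exact Subtype.ext_iff.mp this
        have hsplit := (f x).take_spec hy
        have hdrop : ((f x).dropUntil y hy).copy rfl hre = f y :=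
          hf' y _ (by simp only [isPath_copy]; exact (hf x).dropUntil hy)
        have hlen : (f x).length = 1 + (f y).length := by
          rw [← hsplit, Walk.length_append, htu, ← hdrop]
          simp
        omega
      have hfy : f y = (Walk.cons h.symm (f x)).copy rfl hre := by
        refine (hf' y _ ?_).symm
        simp only [isPath_copy]
        exact (cons_isPath_iff _ _).2 ⟨hf x, hy⟩
      have hnny : ¬(f y).Nil := not_nil_of_ne (by
        simp only [hR, Finset.mem_compl, Finset.mem_filter, Finset.mem_univ, true_and] at hymem
        exact fun hh => hymem hh.symm)
      rw [dart_edge_eq_mk'_iff]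
      right
      ext
      · rw [firstDart_toProd]
      · rw [firstDart_toProd]
        simp [hfy]
  rw [key, Finset.card_compl]
  have := Finset.card_le_univ R
  omega

lemma preconn_of_card_one [Fintype V] [DecidableEq V] (G : SimpleGraph V)
    (h : (Finset.univ.filter fun v => (G.connectedComponentMk v).out = v).card = 1) :
    G.Preconnected := by
  classical
  obtain ⟨r, hr⟩ := Finset.card_eq_one.mp h
  have hmk : ∀ v : V, G.connectedComponentMk ((G.connectedComponentMk v).out)
      = G.connectedComponentMk v := fun v => Quot.out_eq _
  have key : ∀ v : V, (G.connectedComponentMk v).out = r := by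
    intro v
    have hmem : (G.connectedComponentMk v).out ∈
        Finset.univ.filter fun u => (G.connectedComponentMk u).out = u := by
      simp only [Finset.mem_filter, Finset.mem_univ, true_and]
      exact congrArg Quot.out (hmk v)
    rw [hr] at hmem
    simpa using hmem
  intro v w
  have h1 : G.Reachable v (G.connectedComponentMk v).out :=
    (ConnectedComponent.exact (hmk v)).symm
  have h2 : G.Reachable w (G.connectedComponentMk w).out :=
    (ConnectedComponent.exact (hmk w)).symm
  rw [key v] at h1
  rw [key w] at h2
  exact h1.trans h2.symm

end AuxForest

/-- If `W` and `Y` are disjoint independent sets of sizes `k` and `k+1` such that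
`W ∪ Y` induces a forest `T`, every vertex of `W` has a neighbor in `Y`, and every vertex
of `W` has degree at least two in `T`, then `T` is a tree and every vertex of `W` has
degree exactly two in `T`. -/
theorem forest_tree_deg_two [Fintype V] [DecidableEq V]
    (G : SimpleGraph V) [DecidableRel G.Adj] (k : ℕ) (W Y : Finset V)
    (hdisj : Disjoint W Y)
    (hW : _root_.IsIndepSet G ↑W) (hY : _root_.IsIndepSet G ↑Y)
    (hcW : W.card = k) (hcY : Y.card = k + 1)
    (hforest : (G.induce ↑(W ∪ Y)).IsAcyclic)
    (hnbr : ∀ w ∈ W, ∃ y ∈ Y, G.Adj w y)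
    (hdeg : ∀ w ∈ W, 2 ≤ (Y.filter fun y => G.Adj w y).card) :
    (G.induce ↑(W ∪ Y)).Connected ∧
      ∀ w ∈ W, (Y.filter fun y => G.Adj w y).card = 2 := by
  classical
  set s : Finset V := W ∪ Y with hs
  letI : DecidableRel (G.induce (↑s : Set V)).Adj :=
    fun a b => inferInstanceAs (Decidable (G.Adj a.1 b.1))
  set G' := G.induce (↑s : Set V) with hG'
  -- vertex count
  have hcard : Fintype.card ↥(↑s : Set V) = 2 * k + 1 := by
    rw [← Set.toFinset_card, Finset.toFinset_coe, hs, Finset.card_union_of_disjoint hdisj,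
      hcW, hcY]
    ring
  -- degree formula
  have hdegree : ∀ a : ↥(↑s : Set V),
      G'.degree a = (s.filter fun u => G.Adj a.1 u).card := by
    intro a
    rw [← card_neighborFinset_eq_degree]
    refine Finset.card_bij (fun u _ => (u : V)) ?_ ?_ ?_
    · intro u hu
      rw [mem_neighborFinset] at hu
      simp only [Finset.mem_filter]
      exact ⟨Finset.mem_coe.mp u.2, hu⟩
    · intro u _ v _ h
      exact Subtype.ext h
    · intro b hb
      simp only [Finset.mem_filter] at hb
      exact ⟨⟨b, Finset.mem_coe.mpr hb.1⟩, by rw [mem_neighborFinset]; exact hb.2, rfl⟩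
  -- sum of degrees
  have hsum1 : ∑ a : ↥(↑s : Set V), G'.degree a
      = ∑ u ∈ s, (s.filter fun x => G.Adj u x).card := by
    rw [Finset.sum_subtype s (fun x => Iff.symm Finset.mem_coe)
      (fun u => (s.filter fun x => G.Adj u x).card)]
    exact Finset.sum_congr rfl fun a _ => by rw [hdegree]
  -- filter computations
  have hWY : ∀ w ∈ W, (s.filter fun x => G.Adj w x) = Y.filter fun y => G.Adj w y := by
    intro w hw
    rw [hs, Finset.filter_union]
    have hE : W.filter (fun x => G.Adj w x) = ∅ := by
      rw [Finset.filter_eq_empty_iff]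
      intro u hu hadj
      rcases eq_or_ne w u with rfl | hne
      · exact G.irrefl hadj
      · exact hW (Finset.mem_coe.mpr hw) (Finset.mem_coe.mpr hu) hne hadj
    rw [hE, Finset.empty_union]
  have hYW : ∀ y ∈ Y, (s.filter fun x => G.Adj y x) = W.filter fun w => G.Adj w y := by
    intro y hy
    rw [hs, Finset.filter_union]
    have hE : Y.filter (fun x => G.Adj y x) = ∅ := by
      rw [Finset.filter_eq_empty_iff]
      intro u hu hadj
      rcases eq_or_ne y u with rfl | hne
      · exact G.irrefl hadj
      · exact hY (Finset.mem_coe.mpr hy) (Finset.mem_coe.mpr hu) hne hadj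
    rw [hE, Finset.union_empty]
    exact Finset.filter_congr fun u _ => by rw [adj_comm]
  have hdc : ∑ y ∈ Y, (W.filter fun w => G.Adj w y).card
      = ∑ w ∈ W, (Y.filter fun y => G.Adj w y).card := by
    simp only [Finset.card_filter]
    rw [Finset.sum_comm]
  have hsplit : ∑ u ∈ s, (s.filter fun x => G.Adj u x).card
      = ∑ u ∈ W, (s.filter fun x => G.Adj u x).card
        + ∑ u ∈ Y, (s.filter fun x => G.Adj u x).card := by
    rw [hs, Finset.sum_union hdisj]
  have hsum2 : ∑ u ∈ s, (s.filter fun x => G.Adj u x).card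
      = 2 * ∑ w ∈ W, (Y.filter fun y => G.Adj w y).card := by
    have e1 : ∑ u ∈ W, (s.filter fun x => G.Adj u x).card
        = ∑ w ∈ W, (Y.filter fun y => G.Adj w y).card :=
      Finset.sum_congr rfl fun w hw => by rw [hWY w hw]
    have e2 : ∑ u ∈ Y, (s.filter fun x => G.Adj u x).card
        = ∑ y ∈ Y, (W.filter fun w => G.Adj w y).card :=
      Finset.sum_congr rfl fun y hy => by rw [hYW y hy]
    rw [hsplit, e1, e2, hdc]
    ring
  -- edge count
  have hhs : ∑ a : ↥(↑s : Set V), G'.degree a = 2 * G'.edgeFinset.card :=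
    G'.sum_degrees_eq_twice_card_edges
  have hE : G'.edgeFinset.card = ∑ w ∈ W, (Y.filter fun y => G.Adj w y).card := by
    omega
  -- forest count
  have hforestcard := forest_card_aux G' hforest
  rw [hcard] at hforestcard
  -- a vertex
  have hYne : Y.Nonempty := Finset.card_pos.mp (by omega)
  obtain ⟨y0, hy0⟩ := hYne
  have hy0s : y0 ∈ s := by rw [hs]; exact Finset.mem_union_right _ hy0
  let v0 : ↥(↑s : Set V) := ⟨y0, Finset.mem_coe.mpr hy0s⟩
  have hRpos : 1 ≤ (Finset.univ.filter fun v =>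
      (G'.connectedComponentMk v).out = v).card := by
    refine Finset.card_pos.mpr ⟨(G'.connectedComponentMk v0).out, ?_⟩
    simp only [Finset.mem_filter, Finset.mem_univ, true_and]
    exact congrArg Quot.out (Quot.out_eq _ :
      G'.connectedComponentMk (G'.connectedComponentMk v0).out = G'.connectedComponentMk v0)
  have hSge : 2 * k ≤ ∑ w ∈ W, (Y.filter fun y => G.Adj w y).card := by
    calc 2 * k = ∑ _w ∈ W, 2 := by rw [Finset.sum_const, hcW, smul_eq_mul]; ring
    _ ≤ _ := Finset.sum_le_sum hdeg
  have hR1 : (Finset.univ.filter fun v =>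
      (G'.connectedComponentMk v).out = v).card = 1 := by omega
  have hS : ∑ w ∈ W, (Y.filter fun y => G.Adj w y).card = 2 * k := by omega
  haveI : Nonempty ↥(↑s : Set V) := ⟨v0⟩
  refine ⟨Connected.mk (preconn_of_card_one G' hR1), ?_⟩
  intro w hw
  by_contra hne
  have hlt : 2 * k < ∑ w ∈ W, (Y.filter fun y => G.Adj w y).card := by
    calc 2 * k = ∑ _w ∈ W, 2 := by rw [Finset.sum_const, hcW, smul_eq_mul]; ring
    _ < _ := Finset.sum_lt_sum hdeg
        ⟨w, hw, lt_of_le_of_ne (hdeg w hw) (Ne.symm hne)⟩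
  omega
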